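/- Ore's theorem: let G be a finite simple graph on n ≥ 3 vertices such that deg(u) + deg(v) ≥ n for every pair of distinct non-adjacent vertices u and v. Then G is Hamiltonian. -/

import Mathlib

open SimpleGraph Finset Walk
set_option linter.unusedSectionVars false

section OreAux

variable {V : Type*} [Fintype V] [DecidableEq V] {G H : SimpleGraph V}
  [DecidableRel G.Adj] [DecidableRel H.Adj]

theorem concat_of_mem_edges : ∀ {a b c : V} (q : G.Walk a b), q.IsPath → s(c, b) ∈ q.edges →
    ∃ (h : G.Adj c b) (q₀ : G.Walk a c), q = q₀.concat h := by
  intro a b c q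
  induction q with
  | nil => simp
  | @cons a x b h' q' ih =>
    intro hp he
    rw [edges_cons, List.mem_cons] at he
    rcases he with he | he
    · rw [Sym2.eq_iff] at he
      rcases he with ⟨rfl, rfl⟩ | ⟨rfl, rfl⟩
      · -- c = a, b = x : q' is a loop path, hence nil
        have : q' = Walk.nil := (Walk.isPath_iff_eq_nil).mp (hp.of_cons)
        subst this
        exact ⟨h', Walk.nil, rfl⟩
      · -- c = x, b = a : contradiction with path
        exfalso
        have := (Walk.cons_isPath_iff h' q').mp hp
        exact this.2 (q'.end_mem_support)
    · obtain ⟨h, q₀, rfl⟩ := ih hp.of_cons he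
      exact ⟨h, Walk.cons h' q₀, (Walk.concat_cons h' q₀ h).symm⟩

theorem split_at_dart : ∀ {a b : V} (p : G.Walk a b) (d : G.Dart), d ∈ p.darts →
    ∃ (q : G.Walk a d.fst) (r : G.Walk d.snd b), p = q.append (Walk.cons d.adj r) := by
  intro a b p
  induction p with
  | nil => simp
  | @cons a x b h' p' ih =>
    intro d hd
    rw [darts_cons, List.mem_cons] at hd
    rcases hd with rfl | hd
    · exact ⟨Walk.nil, p', rfl⟩
    · obtain ⟨q, r, rfl⟩ := ih d hd
      exact ⟨Walk.cons h' q, r, rfl⟩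

theorem crossover [Fintype V] {u v : V} (p : G.Walk u v) (hp : p.IsPath)
    (hham : p.IsHamiltonian) (huv : ¬ G.Adj u v)
    (d : G.Dart) (hd : d ∈ p.darts) (h1 : G.Adj u d.snd) (h2 : G.Adj d.fst v) :
    ∃ (c : G.Walk u u), c.IsHamiltonianCycle := by
  obtain ⟨q, r, rfl⟩ := split_at_dart p d hd
  set p : G.Walk u v := q.append (Walk.cons d.adj r) with hpdef
  have hufst : u ≠ d.fst := fun h => huv (h ▸ h2)
  have hsndv : d.snd ≠ v := fun h => huv (h ▸ h1)
  -- support facts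
  have hsupp : p.support = q.support ++ r.support := by
    rw [hpdef, support_append, support_cons, List.tail_cons]
  have hnodup : (q.support ++ r.support).Nodup := by
    rw [← hsupp]; exact hp.support_nodup
  have hdisj : q.support.Disjoint r.support := List.disjoint_of_nodup_append hnodup
  -- the cycle
  let c : G.Walk u u :=
    q.append (Walk.cons h2 (r.reverse.append (Walk.cons h1.symm Walk.nil)))
  have hcsupp : c.support = q.support ++ (r.support.reverse ++ [u]) := by
    show (q.append _).support = _
    rw [support_append, support_cons, List.tail_cons, support_append,
      support_reverse, support_cons, support_nil, List.tail_cons]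
  have hctail : c.support.tail = q.support.tail ++ (r.support.reverse ++ [u]) := by
    rw [hcsupp, q.support_eq_cons]; rfl
  have hqcons : q.support = u :: q.support.tail := q.support_eq_cons
  have hcount : ∀ a, c.support.tail.count a = 1 := by
    intro a
    have hpa := hham a
    rw [hsupp, hqcons] at hpa
    rw [hctail]
    simp only [List.cons_append, List.count_cons, List.count_append, List.count_reverse,
      List.count_singleton, List.count_nil, beq_iff_eq] at hpa ⊢
    omega
  have hctnodup : c.support.tail.Nodup := by
    rw [List.nodup_iff_count_le_one]
    exact fun a => le_of_eq (hcount a)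
  -- edges
  have hpedges : p.edges = q.edges ++ (s(d.fst, d.snd) :: r.edges) := by
    rw [hpdef, edges_append, edges_cons]
  have hpedges_nodup := hp.isTrail.edges_nodup
  rw [hpedges] at hpedges_nodup
  have hcedges : c.edges
      = q.edges ++ (s(d.fst, v) :: (r.edges.reverse ++ [s(d.snd, u)])) := by
    show (q.append _).edges = _
    rw [edges_append, edges_cons, edges_append, edges_reverse, edges_cons, edges_nil]
  have husuppq : u ∈ q.support := q.start_mem_support
  have hvsuppr : v ∈ r.support := r.end_mem_support
  have hfstq : d.fst ∈ q.support := q.end_mem_support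
  have hsndr : d.snd ∈ r.support := r.start_mem_support
  have hqnodup : q.edges.Nodup := (List.nodup_append.mp hpedges_nodup).1
  have hrest := (List.nodup_append.mp hpedges_nodup).2.1
  have hrnodup : r.edges.Nodup := (List.nodup_cons.mp hrest).2
  have hqr_disj : ∀ e ∈ q.edges, e ∉ r.edges := by
    intro e he her
    exact (List.disjoint_of_nodup_append hpedges_nodup) he (List.mem_cons_of_mem _ her)
  have he1q : s(d.fst, v) ∉ q.edges := fun h =>
    hdisj (q.snd_mem_support_of_mem_edges h) hvsuppr
  have he1r : s(d.fst, v) ∉ r.edges := fun h =>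
    hdisj hfstq (r.fst_mem_support_of_mem_edges h)
  have he2q : s(d.snd, u) ∉ q.edges := fun h =>
    hdisj (q.fst_mem_support_of_mem_edges h) hsndr
  have he2r : s(d.snd, u) ∉ r.edges := fun h =>
    hdisj husuppq (r.snd_mem_support_of_mem_edges h)
  have he12 : s(d.fst, v) ≠ s(d.snd, u) := by
    intro h
    rw [Sym2.eq_iff] at h
    rcases h with ⟨h1', h2'⟩ | ⟨h1', h2'⟩
    · exact d.adj.ne h1'
    · exact hufst h1'.symm
  have hctrail : c.IsTrail := by
    rw [Walk.isTrail_def, hcedges]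
    rw [List.nodup_append]
    refine ⟨hqnodup, ?_, ?_⟩
    · rw [List.nodup_cons]
      constructor
      · rw [List.mem_append, List.mem_reverse, List.mem_singleton]
        rintro (h | h)
        · exact he1r h
        · exact he12 h
      · rw [List.nodup_append]
        refine ⟨List.nodup_reverse.mpr hrnodup, List.nodup_singleton _, ?_⟩
        intro e he h' h heq; subst h'
        rw [List.mem_reverse] at he
        rw [List.mem_singleton] at h
        subst h; exact he2r he
    · intro e he h' h heq; subst h'
      rw [List.mem_cons, List.mem_append, List.mem_reverse, List.mem_singleton] at h
      rcases h with h | h | h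
      · subst h; exact he1q he
      · exact hqr_disj e he h
      · subst h; exact he2q he
  have hclen : c.length ≠ 0 := by
    show (q.append _).length ≠ 0
    rw [length_append, length_cons]
    omega
  have hcnil : c ≠ Walk.nil := by
    intro h
    exact hclen (by rw [h]; rfl)
  have hccycle : c.IsCycle := by
    rw [Walk.isCycle_def]
    exact ⟨hctrail, hcnil, hctnodup⟩
  exact ⟨c, (Walk.isHamiltonianCycle_iff_isCycle_and_support_count_tail_eq_one).mpr
    ⟨hccycle, hcount⟩⟩



theorem pigeonhole {u v : V} (p : G.Walk u v) (hp : p.IsPath) (hham : p.IsHamiltonian)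
    (hne : u ≠ v) (huv : ¬ G.Adj u v)
    (hdeg : Fintype.card V ≤ G.degree u + G.degree v) :
    ∃ d ∈ p.darts, G.Adj u d.snd ∧ G.Adj d.fst v := by
  classical
  have hdnodup : p.darts.Nodup := p.darts_nodup_of_support_nodup hp.support_nodup
  set S : Finset G.Dart := p.darts.toFinset with hS
  have hScard : S.card = Fintype.card V - 1 := by
    rw [hS, List.toFinset_card_of_nodup hdnodup, p.length_darts, hham.length_eq]
  set A : Finset G.Dart := S.filter (fun d => G.Adj u d.snd) with hA
  set B : Finset G.Dart := S.filter (fun d => G.Adj d.fst v) with hB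
  have hAcard : G.degree u ≤ A.card := by
    rw [← card_neighborFinset_eq_degree]
    apply Finset.card_le_card_of_surjOn (fun d => d.snd)
    intro w hw
    rw [Finset.mem_coe, mem_neighborFinset] at hw
    have hwu : w ≠ u := hw.ne'
    have hwsup : w ∈ p.support := hham.mem_support w
    rw [p.support_eq_cons, List.mem_cons] at hwsup
    rcases hwsup with rfl | hwsup
    · exact absurd rfl hwu
    · rw [← p.map_snd_darts, List.mem_map] at hwsup
      obtain ⟨d, hd, rfl⟩ := hwsup
      refine ⟨d, ?_, rfl⟩
      rw [hA, Finset.mem_coe, Finset.mem_filter]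
      exact ⟨List.mem_toFinset.mpr hd, hw⟩
  have hBcard : G.degree v ≤ B.card := by
    rw [← card_neighborFinset_eq_degree]
    apply Finset.card_le_card_of_surjOn (fun d => d.fst)
    intro w hw
    rw [Finset.mem_coe, mem_neighborFinset] at hw
    have hwv : w ≠ v := hw.ne'
    have hwsup : w ∈ p.support := hham.mem_support w
    rw [← p.map_fst_darts_append, List.mem_append, List.mem_singleton] at hwsup
    rcases hwsup with hwsup | rfl
    · rw [List.mem_map] at hwsup
      obtain ⟨d, hd, rfl⟩ := hwsup
      refine ⟨d, ?_, rfl⟩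
      rw [hB, Finset.mem_coe, Finset.mem_filter]
      exact ⟨List.mem_toFinset.mpr hd, hw.symm⟩
    · exact absurd rfl hwv
  have hinter : (A ∩ B).Nonempty := by
    rw [← Finset.card_pos]
    have hsub : A ∪ B ⊆ S := Finset.union_subset (Finset.filter_subset _ _)
      (Finset.filter_subset _ _)
    have := Finset.card_union_add_card_inter A B
    have hle := Finset.card_le_card hsub
    have hV : 1 ≤ Fintype.card V := Fintype.card_pos_iff.mpr ⟨u⟩
    omega
  obtain ⟨d, hd⟩ := hinter
  rw [Finset.mem_inter, hA, hB, Finset.mem_filter, Finset.mem_filter] at hd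
  exact ⟨d, List.mem_toFinset.mp hd.1.1, hd.1.2, hd.2.2⟩



theorem hamCycle_reverse {u : V} {c : H.Walk u u} (hc : c.IsHamiltonianCycle) :
    c.reverse.IsHamiltonianCycle := by
  rw [Walk.isHamiltonianCycle_iff_isCycle_and_support_count_tail_eq_one] at hc ⊢
  obtain ⟨hcyc, hcount⟩ := hc
  have h1 : c.support = u :: c.support.tail := c.support_eq_cons
  have h2 : c.support.tail ≠ [] := by
    intro h
    have := congrArg List.length h1
    rw [h] at this
    simp only [Walk.length_support, List.length_cons, List.length_nil] at this
    exact hcyc.not_nil (Walk.nil_iff_length_eq.mpr (by omega))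
  have h3 : c.support.tail.getLast h2 = u := by
    rw [List.getLast_tail]
    exact c.getLast_support
  have ht : c.support.tail.dropLast ++ [u] = c.support.tail := by
    have h4 := List.dropLast_append_getLast h2
    rwa [h3] at h4
  have hgoal : c.reverse.support.tail = c.support.tail.dropLast.reverse ++ [u] := by
    rw [Walk.support_reverse, h1]
    conv_lhs => rw [← ht]
    simp
  have hcount' : ∀ a, c.reverse.support.tail.count a = 1 := by
    intro a
    have := hcount a
    rw [← ht, List.count_append] at this
    rw [hgoal, List.count_append, List.count_reverse]
    simpa using this
  refine ⟨?_, hcount'⟩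
  rw [Walk.isCycle_def]
  refine ⟨hcyc.isTrail.reverse, ?_, ?_⟩
  · intro h
    apply hcyc.not_nil
    rw [Walk.nil_iff_length_eq] at *
    rw [← Walk.length_reverse]
    rw [h]
    rfl
  · rw [List.nodup_iff_count_le_one]
    exact fun a => le_of_eq (hcount' a)

/-- From a Hamiltonian cycle `c = cons h q`, the tail `q` is a hamiltonian path avoiding
the first edge. -/
theorem tail_path {u x : V} {c : H.Walk u u} (hc : c.IsHamiltonianCycle)
    (h : H.Adj u x) (q : H.Walk x u) (hq : c = Walk.cons h q) :
    q.IsPath ∧ q.IsHamiltonian ∧ s(u, x) ∉ q.edges := by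
  subst hq
  have hcyc := hc.isCycle
  rw [Walk.cons_isCycle_iff] at hcyc
  refine ⟨hcyc.1, ?_, hcyc.2⟩
  intro a
  have := (Walk.isHamiltonianCycle_iff_isCycle_and_support_count_tail_eq_one.mp hc).2 a
  rwa [Walk.support_cons, List.tail_cons] at this

theorem path_of_cycle_through_edge {u v : V} (c : H.Walk u u) (hc : c.IsHamiltonianCycle)
    (he : s(u, v) ∈ c.edges) (huv : u ≠ v) :
    ∃ (q : H.Walk v u), q.IsPath ∧ q.IsHamiltonian ∧ s(u, v) ∉ q.edges := by
  cases c with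
  | nil => exact absurd Walk.nil_nil hc.isCycle.not_nil
  | @cons _ x _ h q =>
    rw [Walk.edges_cons, List.mem_cons] at he
    rcases he with he | he
    · rw [Sym2.eq_iff] at he
      rcases he with ⟨-, rfl⟩ | ⟨rfl, rfl⟩
      · obtain ⟨h1, h2, h3⟩ := tail_path hc h q rfl
        exact ⟨q, h1, h2, h3⟩
      · exact absurd rfl huv
    · -- s(u,v) = s(v,u) is an edge of q, which ends at u
      rw [Sym2.eq_swap] at he
      obtain ⟨h', q₀, rfl⟩ := concat_of_mem_edges q (tail_path hc h q rfl).1 he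
      -- now reverse the cycle
      have hrev : (Walk.cons h (q₀.concat h')).reverse
          = Walk.cons h'.symm (q₀.reverse.concat h.symm) := by
        rw [Walk.reverse_cons, Walk.reverse_concat]
        simp [Walk.concat, Walk.cons_append]
      have hcr := hamCycle_reverse hc
      rw [hrev] at hcr
      obtain ⟨h1, h2, h3⟩ := tail_path hcr h'.symm (q₀.reverse.concat h.symm) rfl
      exact ⟨q₀.reverse.concat h.symm, h1, h2, h3⟩



/-- `G` plus the edge `u v`. -/
def addEdge (G : SimpleGraph V) (u v : V) : SimpleGraph V where
  Adj a b := G.Adj a b ∨ (a ≠ b ∧ ((a = u ∧ b = v) ∨ (a = v ∧ b = u)))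
  symm := by
    constructor
    rintro a b (h | ⟨hne, h⟩)
    · exact Or.inl h.symm
    · exact Or.inr ⟨hne.symm, h.symm.imp And.symm And.symm⟩
  loopless := by
    constructor
    rintro a (h | ⟨hne, -⟩)
    · exact G.loopless.irrefl a h
    · exact hne rfl

instance (G : SimpleGraph V) [DecidableRel G.Adj] (u v : V) :
    DecidableRel (addEdge G u v).Adj :=
  fun _ _ => inferInstanceAs (Decidable (_ ∨ _))

theorem addEdge_le (G : SimpleGraph V) (u v : V) : G ≤ addEdge G u v :=
  fun _ _ h => Or.inl h

theorem addEdge_adj (G : SimpleGraph V) {u v : V} (huv : u ≠ v) : (addEdge G u v).Adj u v :=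
  Or.inr ⟨huv, Or.inl ⟨rfl, rfl⟩⟩

theorem addEdge_edge_cases (G : SimpleGraph V) {u v : V} {e : Sym2 V}
    (he : e ∈ (addEdge G u v).edgeSet) : e ∈ G.edgeSet ∨ e = s(u, v) := by
  induction e with
  | _ a b =>
    rw [SimpleGraph.mem_edgeSet] at he
    rcases he with h | ⟨-, ⟨rfl, rfl⟩ | ⟨rfl, rfl⟩⟩
    · exact Or.inl h
    · exact Or.inr rfl
    · exact Or.inr (Sym2.eq_swap)

theorem addEdge_degree_le (G : SimpleGraph V) [DecidableRel G.Adj] (u v w : V) :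
    G.degree w ≤ (addEdge G u v).degree w := by
  apply Finset.card_le_card
  intro x hx
  rw [mem_neighborFinset] at hx ⊢
  exact Or.inl hx



theorem exists_walk_support (hadj : ∀ x y : V, x ≠ y → G.Adj x y) :
    ∀ (l : List V) (a b : V), (a :: (l ++ [b])).Nodup →
      ∃ p : G.Walk a b, p.support = a :: (l ++ [b]) := by
  intro l
  induction l with
  | nil =>
    intro a b hnd
    simp only [List.nil_append, List.nodup_cons, List.mem_singleton] at hnd
    exact ⟨Walk.cons (hadj a b hnd.1) Walk.nil, by simp⟩
  | cons x l' ih =>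
    intro a b hnd
    rw [List.cons_append, List.nodup_cons] at hnd
    have hax : a ≠ x := fun h => hnd.1 (h ▸ (List.mem_cons_self (a := x)))
    obtain ⟨p', hp'⟩ := ih x b hnd.2
    exact ⟨Walk.cons (hadj a x hax) p', by rw [Walk.support_cons, hp']; rfl⟩

theorem ham_of_path (hn : 3 ≤ Fintype.card V) {a b : V}
    (p : G.Walk a b) (hp : p.IsPath) (hham : p.IsHamiltonian) (hadj : G.Adj b a) :
    G.IsHamiltonian := by
  have hne : s(b, a) ∉ p.edges := by
    intro h
    rw [Sym2.eq_swap] at h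
    obtain ⟨h', q₀, rfl⟩ := concat_of_mem_edges p hp h
    have hq₀ : q₀.IsPath := by
      rw [Walk.concat_eq_append] at hp
      exact hp.of_append_left
    have : q₀ = Walk.nil := (Walk.isPath_iff_eq_nil).mp hq₀
    subst this
    have hlen := hham.length_eq
    simp only [Walk.concat_nil, Walk.length_cons, Walk.length_nil] at hlen
    omega
  have hcyc : (Walk.cons hadj p).IsCycle :=
    (Walk.cons_isCycle_iff p hadj).mpr ⟨hp, hne⟩
  intro _
  refine ⟨b, Walk.cons hadj p, ?_⟩
  rw [Walk.isHamiltonianCycle_iff_isCycle_and_support_count_tail_eq_one]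
  refine ⟨hcyc, ?_⟩
  intro w
  rw [Walk.support_cons, List.tail_cons]
  exact hham w



theorem step {u v : V} (hne : u ≠ v)
    (hnadj : ¬ G.Adj u v) (hn : 3 ≤ Fintype.card V)
    (hOre : ∀ x y : V, x ≠ y → ¬ G.Adj x y → Fintype.card V ≤ G.degree x + G.degree y)
    (hH : (addEdge G u v).IsHamiltonian) : G.IsHamiltonian := by
  obtain ⟨a, c, hc⟩ := hH (by omega)
  by_cases hall : ∀ e ∈ c.edges, e ∈ G.edgeSet
  · intro _
    refine ⟨a, c.transfer G hall, ?_⟩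
    rw [Walk.isHamiltonianCycle_iff_isCycle_and_support_count_tail_eq_one]
    refine ⟨hc.isCycle.transfer hall, ?_⟩
    intro w
    rw [Walk.support_transfer]
    exact (Walk.isHamiltonianCycle_iff_isCycle_and_support_count_tail_eq_one.mp hc).2 w
  · push_neg at hall
    obtain ⟨e, he, heG⟩ := hall
    have heuv : e = s(u, v) :=
      (addEdge_edge_cases G (c.edges_subset_edgeSet he)).resolve_left heG
    subst heuv
    have hu : u ∈ c.support := c.fst_mem_support_of_mem_edges he
    set c1 := c.rotate u hu with hc1def
    have hc1 : c1.IsHamiltonianCycle := by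
      rw [Walk.isHamiltonianCycle_iff_isCycle_and_support_count_tail_eq_one]
      refine ⟨hc.isCycle.rotate hu, ?_⟩
      intro w
      rw [(Walk.support_rotate c u hu).perm.count_eq]
      exact (Walk.isHamiltonianCycle_iff_isCycle_and_support_count_tail_eq_one.mp hc).2 w
    have he1 : s(u, v) ∈ c1.edges := (Walk.rotate_edges c u hu).perm.mem_iff.mpr he
    obtain ⟨q, hq, hqham, hqe⟩ := path_of_cycle_through_edge c1 hc1 he1 hne
    have hsub : ∀ e ∈ q.edges, e ∈ G.edgeSet := by
      intro e he'
      rcases addEdge_edge_cases G (q.edges_subset_edgeSet he') with h | rfl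
      · exact h
      · exact absurd he' hqe
    set qG := q.transfer G hsub with hqGdef
    have hqGp : qG.IsPath := hq.transfer hsub
    have hqGham : qG.IsHamiltonian := by
      intro w
      rw [hqGdef, Walk.support_transfer]
      exact hqham w
    have hvadj : ¬ G.Adj v u := fun h' => hnadj h'.symm
    obtain ⟨d, hd, h1, h2⟩ := pigeonhole qG hqGp hqGham hne.symm hvadj
      (hOre v u hne.symm hvadj)
    obtain ⟨c', hc'⟩ := crossover qG hqGp hqGham hvadj d hd h1 h2
    exact fun _ => ⟨v, c', hc'⟩

def nonEdges (G : SimpleGraph V) [DecidableRel G.Adj] : Finset (V × V) :=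
  Finset.univ.filter fun p => p.1 ≠ p.2 ∧ ¬ G.Adj p.1 p.2

theorem nonEdges_lt (G : SimpleGraph V) [DecidableRel G.Adj] {u v : V} (hne : u ≠ v)
    (hnadj : ¬ G.Adj u v) : (nonEdges (addEdge G u v)).card < (nonEdges G).card := by
  apply Finset.card_lt_card
  constructor
  · intro p hp
    rw [nonEdges, Finset.mem_filter] at hp ⊢
    exact ⟨hp.1, hp.2.1, fun h => hp.2.2 (addEdge_le G u v h)⟩
  · intro hsub
    have : (u, v) ∈ nonEdges G := by
      rw [nonEdges, Finset.mem_filter]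
      exact ⟨Finset.mem_univ _, hne, hnadj⟩
    have := hsub this
    rw [nonEdges, Finset.mem_filter] at this
    exact this.2.2 (addEdge_adj G hne)

theorem complete_ham (hn : 3 ≤ Fintype.card V)
    (hadj : ∀ x y : V, x ≠ y → G.Adj x y) : G.IsHamiltonian := by
  have hlen : (Finset.univ : Finset V).toList.length = Fintype.card V := by
    rw [Finset.length_toList, Finset.card_univ]
  have hnd : (Finset.univ : Finset V).toList.Nodup := Finset.nodup_toList _
  have hmem : ∀ w : V, w ∈ (Finset.univ : Finset V).toList := fun w =>
    Finset.mem_toList.mpr (Finset.mem_univ w)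
  obtain ⟨a, t, hl⟩ : ∃ a t, (Finset.univ : Finset V).toList = a :: t := by
    cases h : (Finset.univ : Finset V).toList with
    | nil => rw [h] at hlen; simp at hlen; omega
    | cons a t => exact ⟨a, t, rfl⟩
    
  have ht : t ≠ [] := by
    intro h
    rw [hl, h] at hlen
    simp at hlen; omega
  have htt : t.dropLast ++ [t.getLast ht] = t := List.dropLast_append_getLast ht
  set b := t.getLast ht with hb
  have hnd' : (a :: (t.dropLast ++ [b])).Nodup := by
    rw [htt, ← hl]; exact hnd
  obtain ⟨p, hps⟩ := exists_walk_support hadj t.dropLast a b hnd'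
  have hsupp : p.support = (Finset.univ : Finset V).toList := by
    rw [hps, htt, hl]
  have hp : p.IsPath := Walk.IsPath.mk' (by rw [hsupp]; exact hnd)
  have hham : p.IsHamiltonian := hp.isHamiltonian_of_mem (fun w => by
    rw [hsupp]; exact hmem w)
  have hba : b ≠ a := by
    intro h
    have hbt : b ∈ t := by rw [← htt]; exact List.mem_append_right _ (List.mem_singleton_self b)
    rw [hl, List.nodup_cons] at hnd
    exact hnd.1 (h ▸ hbt)
  exact ham_of_path hn p hp hham (hadj b a hba)

theorem ore_aux : ∀ (k : ℕ) {G : SimpleGraph V} [DecidableRel G.Adj],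
    (nonEdges G).card < k → 3 ≤ Fintype.card V →
    (∀ x y : V, x ≠ y → ¬ G.Adj x y → Fintype.card V ≤ G.degree x + G.degree y) →
    G.IsHamiltonian := by
  intro k
  induction k with
  | zero => intro G _ h; omega
  | succ k ih =>
    intro G inst hk hn hOre
    by_cases hcomp : ∀ x y : V, x ≠ y → G.Adj x y
    · exact complete_ham hn hcomp
    · push_neg at hcomp
      obtain ⟨u, v, hne, hnadj⟩ := hcomp
      apply step hne hnadj hn hOre
      apply ih ?_ hn ?_
      · have := nonEdges_lt G hne hnadj
        omega
      · intro x y hxy hnadj'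
        have hG : ¬ G.Adj x y := fun h => hnadj' (Or.inl h)
        calc Fintype.card V ≤ G.degree x + G.degree y := hOre x y hxy hG
          _ ≤ (addEdge G u v).degree x + (addEdge G u v).degree y :=
            Nat.add_le_add (addEdge_degree_le G u v x) (addEdge_degree_le G u v y)


end OreAux

theorem ore_theorem
    {V : Type*} [Fintype V] [DecidableEq V] (G : SimpleGraph V) [DecidableRel G.Adj]
    (hn : 3 ≤ Fintype.card V)
    (h : ∀ u v : V, u ≠ v → ¬ G.Adj u v → Fintype.card V ≤ G.degree u + G.degree v) :
    G.IsHamiltonian := by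
  exact ore_aux ((nonEdges G).card + 1) (Nat.lt_succ_self _) hn h
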